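/- Let κ be a regular uncountable cardinal and let D be a normal ultrafilter on κ. Then for every function f : κ → κ, either there exists γ < κ such that {α < κ : f(α) = γ} ∈ D, or there exists B ∈ D such that f restricted to B is injective. Consequently, if the pushforward ultrafilter f_*(D) = {X ⊆ κ : f⁻¹(X) ∈ D} is nonprincipal, then f is injective on a set in D, and hence f_*(D) is Rudin–Keisler equivalent to D. -/

import Mathlib

/-- The set of ordinals below `o`, as a type. -/
abbrev Below (o : Ordinal.{0}) : Type 1 := {α : Ordinal.{0} // α < o}

/-- `D` is closed under intersections of families indexed by ordinals below `o`
(for `o` the initial ordinal of a cardinal `κ`, this says `D` is `κ`-complete). -/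
def IsOrdComplete (o : Ordinal.{0}) {X : Type*} (D : Ultrafilter X) : Prop :=
  ∀ γ : Ordinal.{0}, γ < o → ∀ A : Below γ → Set X, (∀ i, A i ∈ D) → (⋂ i, A i) ∈ D

/-- An ultrafilter is nonprincipal if the complement of every singleton belongs to it. -/
def Nonprincipal {X : Type*} (D : Ultrafilter X) : Prop := ∀ a : X, {x | x ≠ a} ∈ D

/-- `D` is a normal ultrafilter on the regular uncountable cardinal `κ`:
nonprincipal, `κ`-complete, and every function regressive on a set in `D` is
constant on a set in `D`. -/
def IsNormal (κ : Cardinal.{0}) (D : Ultrafilter (Below κ.ord)) : Prop :=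
  Nonprincipal D ∧ IsOrdComplete κ.ord D ∧
    ∀ f : Below κ.ord → Below κ.ord,
      {α : Below κ.ord | (f α : Ordinal) < (α : Ordinal)} ∈ D →
      ∃ γ : Below κ.ord, {α : Below κ.ord | f α = γ} ∈ D

/-- Two ultrafilters are Rudin–Keisler equivalent if each is the pushforward of the
other under some function. -/
def RKEquiv {X : Type*} (V W : Ultrafilter X) : Prop :=
  (∃ g : X → X, Ultrafilter.map g V = W) ∧ (∃ g : X → X, Ultrafilter.map g W = V)

/-- For a normal ultrafilter `D` on a regular uncountable cardinal `κ` and any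
`f : κ → κ`, either `f` is constant on a set in `D` or `f` is injective on a set in
`D`. Consequently, if the pushforward `f_*(D)` is nonprincipal, then `f` is injective
on a set in `D` and `f_*(D)` is Rudin–Keisler equivalent to `D`. -/
theorem normal_constant_or_injective (κ : Cardinal.{0}) (hreg : κ.IsRegular)
    (hunc : Cardinal.aleph0 < κ)
    (D : Ultrafilter (Below κ.ord)) (hD : IsNormal κ D)
    (f : Below κ.ord → Below κ.ord) :
    ((∃ γ : Below κ.ord, {α : Below κ.ord | f α = γ} ∈ D) ∨
      (∃ B ∈ D, Set.InjOn f B)) ∧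
    (Nonprincipal (Ultrafilter.map f D) →
      (∃ B ∈ D, Set.InjOn f B) ∧ RKEquiv (Ultrafilter.map f D) D) := by

  classical
  obtain ⟨hnp, hcomp, hnorm⟩ := hD
  -- Closure under diagonal intersections
  have hdiag : ∀ A : Below κ.ord → Set (Below κ.ord), (∀ γ, A γ ∈ D) →
      {α : Below κ.ord | ∀ γ : Below κ.ord, (γ : Ordinal) < (α : Ordinal) → α ∈ A γ} ∈ D := by
    intro A hA
    by_contra hΔ
    have hS : {α : Below κ.ord | ∃ γ : Below κ.ord,
        (γ : Ordinal) < (α : Ordinal) ∧ α ∉ A γ} ∈ D := by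
      rw [← Ultrafilter.compl_mem_iff_notMem] at hΔ
      convert hΔ using 1
      ext α
      simp only [Set.mem_compl_iff, Set.mem_setOf_eq, not_forall]
      constructor
      · rintro ⟨γ, h1, h2⟩; exact ⟨γ, h1, h2⟩
      · rintro ⟨γ, h1, h2⟩; exact ⟨γ, h1, h2⟩
    set g : Below κ.ord → Below κ.ord := fun α =>
      if h : ∃ γ : Below κ.ord, (γ : Ordinal) < (α : Ordinal) ∧ α ∉ A γ then h.choose else α
      with hgdef
    have hreg' : {α : Below κ.ord | (g α : Ordinal) < (α : Ordinal)} ∈ D := by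
      refine D.toFilter.mem_of_superset hS ?_
      intro α hα
      have hα' : ∃ γ : Below κ.ord, (γ : Ordinal) < (α : Ordinal) ∧ α ∉ A γ := hα
      simp only [Set.mem_setOf_eq, hgdef]
      rw [dif_pos hα']
      exact hα'.choose_spec.1
    obtain ⟨γ₀, hT⟩ := hnorm g hreg'
    have hmem : ({α : Below κ.ord | g α = γ₀} ∩ {α : Below κ.ord | ∃ γ : Below κ.ord,
        (γ : Ordinal) < (α : Ordinal) ∧ α ∉ A γ} ∩ A γ₀) ∈ D :=
      Filter.inter_mem (Filter.inter_mem hT hS) (hA γ₀)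
    obtain ⟨α, ⟨⟨h1, h2⟩, h3⟩⟩ := D.nonempty_of_mem hmem
    have hnot : α ∉ A (g α) := by
      have h2' : ∃ γ : Below κ.ord, (γ : Ordinal) < (α : Ordinal) ∧ α ∉ A γ := h2
      simp only [hgdef]; rw [dif_pos h2']; exact h2'.choose_spec.2
    rw [h1] at hnot; exact hnot h3
  -- key dichotomy
  have key : (∃ γ : Below κ.ord, {α : Below κ.ord | f α = γ} ∈ D) ∨
      (∃ B ∈ D, Set.InjOn f B) := by
    by_cases hc : ∃ γ : Below κ.ord, {α : Below κ.ord | f α = γ} ∈ D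
    · exact Or.inl hc
    · right
      push_neg at hc
      have hA : ∀ γ : Below κ.ord, {α : Below κ.ord | f α ≠ f γ} ∈ D := by
        intro γ
        have := hc (f γ)
        rw [← Ultrafilter.compl_mem_iff_notMem] at this
        exact this
      refine ⟨_, hdiag (fun γ => {α : Below κ.ord | f α ≠ f γ}) hA, ?_⟩
      intro α hα β hβ hfe
      rcases lt_trichotomy (α : Ordinal) (β : Ordinal) with h | h | h
      · exact absurd hfe.symm (hβ α h)
      · exact Subtype.ext h
      · exact absurd hfe (hα β h)
  refine ⟨key, fun hnp' => ?_⟩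
  have hnc : ¬ ∃ γ : Below κ.ord, {α : Below κ.ord | f α = γ} ∈ D := by
    rintro ⟨γ, hγ⟩
    have h1 : {α : Below κ.ord | f α ≠ γ} ∈ D := by
      have := hnp' γ
      rwa [Ultrafilter.mem_map] at this
    obtain ⟨α, hα1, hα2⟩ := D.nonempty_of_mem (Filter.inter_mem hγ h1)
    exact hα2 hα1
  obtain ⟨B, hBD, hInj⟩ := key.resolve_left hnc
  refine ⟨⟨B, hBD, hInj⟩, ?_, ⟨f, rfl⟩⟩
  set g : Below κ.ord → Below κ.ord := fun x =>
    if h : ∃ α ∈ B, f α = x then h.choose else x with hgdef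
  refine ⟨g, ?_⟩
  have hgf : ∀ α ∈ B, g (f α) = α := by
    intro α hα
    have hex : ∃ β ∈ B, f β = f α := ⟨α, hα, rfl⟩
    simp only [hgdef]
    rw [dif_pos hex]
    exact hInj hex.choose_spec.1 hα hex.choose_spec.2
  apply Ultrafilter.coe_injective
  rw [Ultrafilter.coe_map, Ultrafilter.coe_map, Filter.map_map]
  have heq : (g ∘ f) =ᶠ[(D : Filter (Below κ.ord))] id := by
    refine Filter.eventuallyEq_of_mem hBD ?_
    intro α hα
    exact hgf α hα
  rw [Filter.map_congr heq, Filter.map_id]
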